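/- Let A be a unital C*-algebra and let a be invertible up to (p,q) where p, q are projections. Then there exists a projection q' ∈ A, Murray–von Neumann equivalent to q, such that a is invertible up to (p, q') and q' a (1-p) = 0. -/

import Mathlib

/-- A projection in a C*-algebra: a self-adjoint idempotent. -/
def IsProjection {A : Type*} [Ring A] [StarRing A] (p : A) : Prop :=
  star p = p ∧ p * p = p

/-- `b` is a `(p,q)`-inverse of `a`. -/
def IsPQInv {A : Type*} [Ring A] (a p q b : A) : Prop :=
  b = (1 - p) * b * (1 - q) ∧ (1 - q) * a * (1 - p) * b = 1 - q ∧
    b * ((1 - q) * a * (1 - p)) = 1 - p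

/-- `a` is invertible up to `(p,q)`. -/
def InvUpTo {A : Type*} [Ring A] (a p q : A) : Prop := ∃ b, IsPQInv a p q b

open scoped NNReal

/-- Conjugation by a self-adjoint involution, as a star algebra homomorphism. -/
noncomputable def conjSAH {A : Type*} [NormedRing A] [StarRing A] [CStarRing A] [CompleteSpace A]
    [NormedAlgebra ℂ A] [StarModule ℂ A] (s : A) (hss : s * s = 1) (hs : star s = s) :
    A →⋆ₐ[ℂ] A where
  toFun z := s * z * s
  map_one' := by show s * 1 * s = 1; rw [mul_one, hss]
  map_mul' x y := by
    show s * (x * y) * s = (s * x * s) * (s * y * s)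
    calc s * (x * y) * s = (s * x) * (s * s) * (y * s) := by rw [hss]; noncomm_ring
    _ = (s * x * s) * (s * y * s) := by noncomm_ring
  map_zero' := by simp
  map_add' x y := by show s * (x + y) * s = s * x * s + s * y * s; noncomm_ring
  commutes' c := by
    simp [Algebra.algebraMap_eq_smul_one, mul_smul_comm, smul_mul_assoc, hss]
  map_star' z := by simp only [star_mul, hs, mul_assoc]

/-- Key analytic lemma: given a projection `q` commuting with `t = 1 + w*w`, there is a
positive "inverse square root" `g` of `t` commuting with `q` and `t`. -/
lemma exists_inv_sqrt {A : Type*} [NormedRing A] [StarRing A] [CStarRing A] [CompleteSpace A]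
    [NormedAlgebra ℂ A] [StarModule ℂ A] (q t w : A)
    (hq2 : q * q = q) (hq_sa : star q = q) (hqt : q * t = t * q) (hw : t = 1 + star w * w) :
    ∃ g : A, star g = g ∧ g * g * t = 1 ∧ t * (g * g) = 1 ∧ q * g = g * q ∧ t * g = g * t := by
  letI : CStarAlgebra A := {}
  letI := CStarAlgebra.spectralOrder A
  haveI := CStarAlgebra.spectralOrderedRing A
  have ht_unit : IsUnit t := by
    rw [hw]
    exact CStarAlgebra.isUnit_of_le 1
      (le_add_of_nonneg_right (star_mul_self_nonneg w))
  have hu : (ht_unit.unit : A) = t := ht_unit.unit_spec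
  have htpos : (0 : A) ≤ t := by
    rw [hw]; exact add_nonneg zero_le_one (star_mul_self_nonneg w)
  set x := ((ht_unit.unit⁻¹ : Aˣ) : A) with hxdef
  have hxpos : (0 : A) ≤ x := CFC.inv_nonneg_of_nonneg ht_unit.unit (by rw [hu]; exact htpos)
  have htx : t * x = 1 := by rw [← hu]; exact ht_unit.unit.mul_inv
  have hxt : x * t = 1 := by rw [← hu]; exact ht_unit.unit.inv_mul
  set g := CFC.sqrt x with hgdef
  have hg2 : g * g = x := CFC.sqrt_mul_sqrt_self x hxpos
  have hgsa : star g = g := (IsSelfAdjoint.of_nonneg (CFC.sqrt_nonneg x))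
  have hqx : q * x = x * q := by
    calc q * x = (x * t) * (q * x) := by rw [hxt, one_mul]
    _ = x * ((t * q) * x) := by noncomm_ring
    _ = x * ((q * t) * x) := by rw [← hqt]
    _ = (x * q) * (t * x) := by noncomm_ring
    _ = x * q := by rw [htx, mul_one]
  -- the symmetry `s`
  set s := 1 - q - q with hsdef
  have hss : s * s = 1 := by
    have : s * s = 1 - (q + q + q + q) + (q * q + q * q + q * q + q * q) := by
      rw [hsdef]; noncomm_ring
    rw [this, hq2]; abel
  have hs_sa : star s = s := by rw [hsdef]; simp [hq_sa]
  have hsx : s * x * s = x := by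
    have h1 : s * x = x * s := by
      rw [hsdef]
      calc (1 - q - q) * x = x - (q * x + q * x) := by noncomm_ring
      _ = x - (x * q + x * q) := by rw [hqx]
      _ = x * (1 - q - q) := by noncomm_ring
    rw [h1, mul_assoc, hss, mul_one]
  have hcont : Continuous (conjSAH s hss hs_sa) := by
    show Continuous fun z : A => s * z * s
    fun_prop
  have key : s * g * s = g := by
    have h0 : (0 : A) ≤ (conjSAH s hss hs_sa) x := by
      show (0 : A) ≤ s * x * s; rw [hsx]; exact hxpos
    have h := StarAlgHomClass.map_cfc (conjSAH s hss hs_sa) NNReal.sqrt x (by fun_prop)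
      hcont hxpos h0
    have h2 : (conjSAH s hss hs_sa) x = x := hsx
    rw [h2, ← CFC.sqrt_eq_cfc] at h
    exact h
  have hsg : s * g = g * s := by
    calc s * g = (s * g * s) * s := by rw [mul_assoc, hss, mul_one]
    _ = g * s := by rw [key]
  have hqg : q * g = g * q := by
    have h1 : g - (q * g + q * g) = g - (g * q + g * q) := by
      calc g - (q * g + q * g) = (1 - q - q) * g := by noncomm_ring
      _ = g * (1 - q - q) := by rw [← hsdef, hsg]
      _ = g - (g * q + g * q) := by noncomm_ring
    have h2 : q * g + q * g = g * q + g * q := sub_right_injective h1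
    have h3 : (2 : ℂ) • (q * g) = (2 : ℂ) • (g * q) := by
      rw [two_smul, two_smul]; exact h2
    exact smul_right_injective A (two_ne_zero) h3
  have hgx : g * x = x * g := by
    have h := cfc_commute_cfc NNReal.sqrt _root_.id x
    rw [cfc_id NNReal x hxpos, ← CFC.sqrt_eq_cfc] at h
    exact h
  have htg : t * g = g * t := by
    calc t * g = t * g * (x * t) := by rw [hxt, mul_one]
    _ = t * (g * x) * t := by noncomm_ring
    _ = t * (x * g) * t := by rw [hgx]
    _ = (t * x) * (g * t) := by noncomm_ring
    _ = g * t := by rw [htx, one_mul]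
  exact ⟨g, hgsa, by rw [hg2]; exact hxt, by rw [hg2]; exact htx, hqg, htg⟩

/-- Triangularization: if `a` is invertible up to `(p,q)`, there is a projection
`q' ∼ q` such that `a` is invertible up to `(p,q')` and `q' a (1-p) = 0`. -/
theorem triangularization_left
    {A : Type*} [NormedRing A] [StarRing A] [CStarRing A] [CompleteSpace A]
    [NormedAlgebra ℂ A] [StarModule ℂ A]
    (a p q : A) (hp : IsProjection p) (hq : IsProjection q)
    (h : InvUpTo a p q) :
    ∃ q' : A, IsProjection q' ∧ (∃ v : A, v * star v = q ∧ star v * v = q') ∧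
      InvUpTo a p q' ∧ q' * a * (1 - p) = 0 := by
  obtain ⟨b, hb1, hb2, hb3⟩ := h
  set e := 1 - p with he
  set f := 1 - q with hf
  have hee : e * e = e := by rw [he]; rw [mul_sub, sub_mul, sub_mul, hp.2]; noncomm_ring
  have hff : f * f = f := by rw [hf]; rw [mul_sub, sub_mul, sub_mul, hq.2]; noncomm_ring
  have hf_sa : star f = f := by rw [hf]; simp [hq.1]
  -- basic consequences
  have hbf : b * f = b := by
    conv_lhs => rw [hb1]
    rw [mul_assoc (e * b) f f, hff, ← hb1]
  have heb : e * b = b := by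
    conv_lhs => rw [hb1]
    calc e * (e * b * f) = (e * e) * b * f := by noncomm_ring
    _ = e * b * f := by rw [hee]
    _ = b := by rw [← hb1]
  have hba : b * (a * e) = e := by
    calc b * (a * e) = (b * f) * (a * e) := by rw [hbf]
    _ = b * (f * a * e) := by noncomm_ring
    _ = e := hb3
  set x := a * e * b with hx
  have x1 : x * x = x := by
    calc x * x = a * e * (b * (a * e)) * b := by rw [hx]; noncomm_ring
    _ = a * e * e * b := by rw [hba]
    _ = a * (e * e) * b := by noncomm_ring
    _ = x := by rw [hee, hx]
  have x2 : f * x = f := by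
    calc f * x = f * a * e * b := by rw [hx]; noncomm_ring
    _ = f := hb2
  have x3 : x * f = x := by
    calc x * f = a * e * (b * f) := by rw [hx]; noncomm_ring
    _ = x := by rw [hbf, hx]
  have hq1f : q = 1 - f := by rw [hf, sub_sub_cancel]
  have xq : x * q = 0 := by rw [hq1f, mul_sub, mul_one, x3, sub_self]
  have xae : x * (a * e) = a * e := by
    calc x * (a * e) = a * e * (b * (a * e)) := by rw [hx]; noncomm_ring
    _ = a * (e * e) := by rw [hba]; noncomm_ring
    _ = a * e := by rw [hee]
  set y := 1 - x with hy
  have yy : y * y = y := by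
    have : y * y = 1 - x - x + x * x := by rw [hy]; noncomm_ring
    rw [this, x1, hy]; abel
  have qy : q * y = y := by
    have hfy : f * y = 0 := by rw [hy, mul_sub, mul_one, x2, sub_self]
    calc q * y = (1 - f) * y := by rw [hq1f]
    _ = y - f * y := by noncomm_ring
    _ = y := by rw [hfy, sub_zero]
  have yq : y * q = q := by
    calc y * q = (1 - x) * q := by rw [hy]
    _ = q - x * q := by noncomm_ring
    _ = q := by rw [xq, sub_zero]
  have ysq : star y * q = star y := by
    calc star y * q = star y * star q := by rw [hq.1]
    _ = star (q * y) := by rw [star_mul]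
    _ = star y := by rw [qy]
  have qsy : q * star y = q := by
    calc q * star y = star q * star y := by rw [hq.1]
    _ = star (y * q) := by rw [star_mul]
    _ = q := by rw [yq, hq.1]
  have yx : y * x = 0 := by rw [hy, sub_mul, one_mul, x1, sub_self]
  have yae : y * (a * e) = 0 := by
    rw [hy, sub_mul, one_mul, xae, sub_self]
  set d := y * star y with hd
  set w := f * star y with hwdef
  set t := (1 : A) + star w * w with ht
  have hyf : y * f = y - q := by
    rw [hf, mul_sub, mul_one, yq]
  have hw_eq : star w * w = d - q := by
    have hsw : star w = y * f := by rw [hwdef, star_mul, hf_sa, star_star]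
    calc star w * w = (y * f) * (f * star y) := by rw [hsw, hwdef]
    _ = (y * (f * f)) * star y := by noncomm_ring
    _ = (y * f) * star y := by rw [hff]
    _ = (y - q) * star y := by rw [hyf]
    _ = y * star y - q * star y := by noncomm_ring
    _ = d - q := by rw [qsy, hd]
  have htd : t = d + (1 - q) := by rw [ht, hw_eq]; abel
  have qd : q * d = d := by rw [hd, ← mul_assoc, qy]
  have dq : d * q = d := by rw [hd, mul_assoc, ysq]
  have hdt : q * t = d := by
    calc q * t = q * d + (q * 1 - q * q) := by rw [htd]; noncomm_ring
    _ = d := by rw [qd, mul_one, hq.2]; abel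
  have htq : t * q = d := by
    calc t * q = d * q + (1 * q - q * q) := by rw [htd]; noncomm_ring
    _ = d := by rw [dq, one_mul, hq.2]; abel
  have hqt : q * t = t * q := by rw [hdt, htq]
  obtain ⟨g, hgsa, hggt, htgg, hqg, htg⟩ := exists_inv_sqrt q t w hq.2 hq.1 hqt ht
  have hdgg : d * (g * g) = q := by
    rw [← hdt, mul_assoc, htgg, mul_one]
  have hdg : d * g = g * d := by
    calc d * g = q * (t * g) := by rw [← hdt, mul_assoc]
    _ = q * (g * t) := by rw [htg]
    _ = (q * g) * t := by rw [mul_assoc]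
    _ = g * (q * t) := by rw [hqg, mul_assoc]
    _ = g * d := by rw [hdt]
  set v := g * y with hv
  have hsv : star v = star y * g := by rw [hv, star_mul, hgsa]
  have hvv : v * star v = q := by
    calc v * star v = g * (y * star y) * g := by rw [hv, hsv]; noncomm_ring
    _ = (g * d) * g := by rw [hd]
    _ = (d * g) * g := by rw [hdg]
    _ = d * (g * g) := by noncomm_ring
    _ = q := hdgg
  set q' := star v * v with hq'
  have hq'_sa : star q' = q' := by rw [hq', star_mul, star_star]
  have hqv : q * v = v := by
    calc q * v = (q * g) * y := by rw [hv, mul_assoc]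
    _ = g * (q * y) := by rw [hqg, mul_assoc]
    _ = v := by rw [qy, hv]
  have hq'2 : q' * q' = q' := by
    calc q' * q' = star v * ((v * star v) * v) := by rw [hq']; noncomm_ring
    _ = star v * (q * v) := by rw [hvv]
    _ = q' := by rw [hqv, hq']
  have hyq' : y * q' = y := by
    calc y * q' = ((y * star y) * (g * g)) * y := by rw [hq', hsv, hv]; noncomm_ring
    _ = q * y := by rw [← hd, hdgg]
    _ = y := qy
  have hq'ae : q' * (a * e) = 0 := by
    calc q' * (a * e) = (star y * g) * (g * (y * (a * e))) := by
          rw [hq', hsv, hv]; noncomm_ring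
    _ = 0 := by rw [yae, mul_zero, mul_zero]
  have hxq' : x * (1 - q') = 1 - q' := by
    have hy0 : y * (1 - q') = 0 := by rw [mul_sub, mul_one, hyq', sub_self]
    have hx1y : x = 1 - y := by rw [hy, sub_sub_cancel]
    rw [hx1y, sub_mul, one_mul, hy0, sub_zero]
  have goal4 : q' * a * e = 0 := by rw [mul_assoc]; exact hq'ae
  have hQQ : (1 - q') * (1 - q') = 1 - q' := by
    rw [mul_sub, sub_mul, sub_mul, hq'2]; noncomm_ring
  have hQae : (1 - q') * a * e = a * e := by
    rw [sub_mul, sub_mul, one_mul, goal4, sub_zero]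
  refine ⟨q', ⟨hq'_sa, hq'2⟩, ⟨v, hvv, hq'.symm⟩, ⟨b * (1 - q'), ?_, ?_, ?_⟩, goal4⟩
  · calc b * (1 - q') = (e * b) * ((1 - q') * (1 - q')) := by rw [heb, hQQ]
    _ = e * (b * (1 - q')) * (1 - q') := by noncomm_ring
  · calc (1 - q') * a * e * (b * (1 - q')) = ((1 - q') * a * e) * (b * (1 - q')) := rfl
    _ = (a * e) * (b * (1 - q')) := by rw [hQae]
    _ = (a * e * b) * (1 - q') := by noncomm_ring
    _ = 1 - q' := by rw [← hx, hxq']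
  · calc b * (1 - q') * ((1 - q') * a * e) = b * (1 - q') * (a * e) := by rw [hQae]
    _ = b * (a * e) - b * (q' * (a * e)) := by noncomm_ring
    _ = e := by rw [hq'ae, mul_zero, sub_zero, hba]
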